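/- Let 1 ≤ k < n, let E_1, …, E_n be Banach spaces over 𝕂 (= ℝ or ℂ), let A : E_1 × ⋯ × E_n → 𝕂 be a continuous n-linear form, and let A_k : E_1 × ⋯ × E_k → L(E_{k+1},…,E_n;𝕂) be the associated k-linear map into the Banach space of continuous (n−k)-linear forms, A_k(x^1,…,x^k)(x^{k+1},…,x^n) = A(x^1,…,x^n). If A_k is almost summing, then for all finite families (x_j^i)_{j=1}^m in E_i (i = 1,…,n): Σ_{j=1}^m |A(x_j^1,…,x_j^n)| ≤ ‖A_k‖_{a.s} · ∏_{i=1}^k ‖(x_j^i)_{j=1}^m‖_{ℓ_2^w(E_i)} · ∏_{i=k+1}^n ‖(x_j^i)_{j=1}^m‖_{Rad(E_i)}. -/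

import Mathlib

open scoped BigOperators NNReal ENNReal

/-- The weak `ℓ_r` norm of a finite family `(x_j)` in a normed space:
`sup_{‖φ‖ ≤ 1} (∑_j ‖φ(x_j)‖^r)^(1/r)`. -/
noncomputable def weakNorm (𝕜 : Type*) [RCLike 𝕜] {E : Type*} [NormedAddCommGroup E]
    [NormedSpace 𝕜 E] (r : ℝ) {m : ℕ} (x : Fin m → E) : ℝ :=
  ⨆ φ : {φ : E →L[𝕜] 𝕜 // ‖φ‖ ≤ 1}, (∑ j, ‖φ.1 (x j)‖ ^ r) ^ (1 / r)

/-- The Rademacher norm of a finite family `(x_j)_{j=1}^m` in a normed space: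
`(2^{-m} ∑_{ε ∈ {-1,1}^m} ‖∑_j ε_j x_j‖²)^{1/2}`. -/
noncomputable def radNorm {E : Type*} [NormedAddCommGroup E] {m : ℕ} (x : Fin m → E) : ℝ :=
  ((∑ ε : Fin m → Bool, ‖∑ j, (if ε j then x j else -x j)‖ ^ 2) / (2 : ℝ) ^ m) ^ ((1 : ℝ) / 2)


section sg
variable (𝕜 : Type*) [RCLike 𝕜]

def sg (b : Bool) : 𝕜 := if b then 1 else -1

variable {𝕜}

lemma sg_smul {F : Type*} [AddCommGroup F] [Module 𝕜 F] (b : Bool) (v : F) :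
    sg 𝕜 b • v = if b then v else -v := by
  cases b <;> simp [sg]

lemma norm_sg (b : Bool) : ‖sg 𝕜 b‖ = 1 := by cases b <;> simp [sg]

lemma sg_mul_self (b : Bool) : sg 𝕜 b * sg 𝕜 b = 1 := by cases b <;> simp [sg]

lemma sg_not (b : Bool) : sg 𝕜 (!b) = - sg 𝕜 b := by cases b <;> simp [sg]

lemma sg_beq (a b : Bool) : sg 𝕜 (a == b) = sg 𝕜 a * sg 𝕜 b := by
  cases a <;> cases b <;> simp [sg]

lemma sum_sg_mul {m : ℕ} (j j' : Fin m) :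
    ∑ e : Fin m → Bool, sg 𝕜 (e j) * sg 𝕜 (e j') =
      if j' = j then ((2 : 𝕜) ^ m) else 0 := by
  classical
  by_cases h : j' = j
  · subst h
    simp only [sg_mul_self, if_true, Finset.sum_const, Finset.card_univ, nsmul_eq_mul, mul_one]
    norm_num [Fintype.card_fun]
  · rw [if_neg h]
    have hbij : Function.Bijective (fun e : Fin m → Bool => Function.update e j' (!(e j'))) := by
      have hinv : Function.Involutive (fun e : Fin m → Bool => Function.update e j' (!(e j'))) := by
        intro e
        funext t
        by_cases ht : t = j'
        · subst ht; simp
        · simp [Function.update_of_ne ht]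
      exact hinv.bijective
    have hS : ∑ e : Fin m → Bool, sg 𝕜 (e j) * sg 𝕜 (e j')
        = ∑ e : Fin m → Bool, -(sg 𝕜 (e j) * sg 𝕜 (e j')) := by
      refine Fintype.sum_bijective _ hbij _ _ ?_
      intro e
      have h1 : Function.update e j' (!(e j')) j = e j := Function.update_of_ne (fun hh => h hh.symm) _ _
      have h2 : Function.update e j' (!(e j')) j' = !(e j') := Function.update_self _ _ _
      rw [h1, h2, sg_not]
      ring
    rw [Finset.sum_neg_distrib] at hS
    exact add_self_eq_zero.mp (eq_neg_iff_add_eq_zero.mp hS)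

end sg

lemma key_identity {𝕜 : Type*} [RCLike 𝕜] {l m : ℕ} {G : Fin l → Type*}
    [∀ i, NormedAddCommGroup (G i)] [∀ i, NormedSpace 𝕜 (G i)]
    (T : Fin m → ContinuousMultilinearMap 𝕜 G 𝕜) (y : ∀ i, Fin m → G i) :
    ∑ ε : Fin l → Fin m → Bool,
      (∑ j, (∏ i, sg 𝕜 (ε i j)) • T j) (fun i => ∑ j, sg 𝕜 (ε i j) • y i j)
      = ((2 : 𝕜) ^ m) ^ l * ∑ j, T j (fun i => y i j) := by
  classical
  have expand : ∀ ε : Fin l → Fin m → Bool,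
      (∑ j, (∏ i, sg 𝕜 (ε i j)) • T j) (fun i => ∑ j, sg 𝕜 (ε i j) • y i j)
      = ∑ j, ∑ r : Fin l → Fin m,
          (∏ i, (sg 𝕜 (ε i j) * sg 𝕜 (ε i (r i)))) * T j (fun i => y i (r i)) := by
    intro ε
    rw [ContinuousMultilinearMap.sum_apply]
    refine Finset.sum_congr rfl fun j _ => ?_
    rw [ContinuousMultilinearMap.smul_apply, ContinuousMultilinearMap.map_sum, Finset.smul_sum]
    refine Finset.sum_congr rfl fun r _ => ?_
    rw [ContinuousMultilinearMap.map_smul_univ, smul_smul, smul_eq_mul, ← Finset.prod_mul_distrib]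
  calc ∑ ε : Fin l → Fin m → Bool,
        (∑ j, (∏ i, sg 𝕜 (ε i j)) • T j) (fun i => ∑ j, sg 𝕜 (ε i j) • y i j)
      = ∑ j, ∑ r : Fin l → Fin m,
          (∑ ε : Fin l → Fin m → Bool, ∏ i, (sg 𝕜 (ε i j) * sg 𝕜 (ε i (r i))))
            * T j (fun i => y i (r i)) := by
        rw [Finset.sum_congr rfl fun ε _ => expand ε, Finset.sum_comm]
        refine Finset.sum_congr rfl fun j _ => ?_
        rw [Finset.sum_comm]
        refine Finset.sum_congr rfl fun r _ => ?_
        rw [Finset.sum_mul]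
    _ = ∑ j, ∑ r : Fin l → Fin m,
          (if r = (fun _ => j) then ((2:𝕜) ^ m) ^ l else 0) * T j (fun i => y i (r i)) := by
        refine Finset.sum_congr rfl fun j _ => Finset.sum_congr rfl fun r _ => ?_
        congr 1
        have h1 : ∑ ε : Fin l → Fin m → Bool, ∏ i, (sg 𝕜 (ε i j) * sg 𝕜 (ε i (r i)))
            = ∏ i, ∑ e : Fin m → Bool, sg 𝕜 (e j) * sg 𝕜 (e (r i)) := by
          rw [← Finset.sum_prod_piFinset]
          rw [Fintype.piFinset_univ]
        rw [h1]
        by_cases hr : r = (fun _ => j)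
        · subst hr
          rw [if_pos rfl]
          simp [sum_sg_mul]
        · rw [if_neg hr]
          obtain ⟨i, hi⟩ := Function.ne_iff.mp hr
          refine Finset.prod_eq_zero (Finset.mem_univ i) ?_
          rw [sum_sg_mul, if_neg]
          exact fun hh => hi hh
    _ = ((2 : 𝕜) ^ m) ^ l * ∑ j, T j (fun i => y i j) := by
        rw [Finset.mul_sum]
        refine Finset.sum_congr rfl fun j _ => ?_
        simp only [ite_mul, zero_mul, Finset.sum_ite_eq', Finset.mem_univ, if_true]

lemma sum_sq_absorb {𝕜 : Type*} [RCLike 𝕜] {m : ℕ} {F : Type*} [NormedAddCommGroup F]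
    [Module 𝕜 F] (s : Fin m → 𝕜) (b : Fin m → Bool) (hs : ∀ j, s j = sg 𝕜 (b j))
    (T : Fin m → F) :
    ∑ e : Fin m → Bool, ‖∑ j, (sg 𝕜 (e j) * s j) • T j‖ ^ 2
      = ∑ e : Fin m → Bool, ‖∑ j, sg 𝕜 (e j) • T j‖ ^ 2 := by
  have hbij : Function.Bijective (fun e : Fin m → Bool => fun j => (e j == b j)) := by
    have hinv : Function.Involutive (fun e : Fin m → Bool => fun j => (e j == b j)) := by
      intro e; funext j
      show ((e j == b j) == b j) = e j
      cases e j <;> cases b j <;> rfl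
    exact hinv.bijective
  refine Fintype.sum_bijective _ hbij _ _ ?_
  intro e
  refine congrArg (fun t : F => ‖t‖ ^ 2) (Finset.sum_congr rfl fun j _ => ?_)
  show (sg 𝕜 (e j) * s j) • T j = sg 𝕜 (e j == b j) • T j
  rw [sg_beq, ← hs j]

lemma radNorm_nonneg {E : Type*} [NormedAddCommGroup E] {m : ℕ} (x : Fin m → E) :
    0 ≤ radNorm x := by
  unfold radNorm
  positivity

lemma radNorm_sq {𝕜 : Type*} [RCLike 𝕜] {E : Type*} [NormedAddCommGroup E]
    [NormedSpace 𝕜 E] {m : ℕ} (x : Fin m → E) :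
    ∑ e : Fin m → Bool, ‖∑ j, sg 𝕜 (e j) • x j‖ ^ 2 = (2 : ℝ) ^ m * radNorm x ^ 2 := by
  have h1 : radNorm x ^ 2
      = (∑ ε : Fin m → Bool, ‖∑ j, (if ε j then x j else -x j)‖ ^ 2) / (2 : ℝ) ^ m := by
    unfold radNorm
    rw [← Real.rpow_natCast (((∑ ε : Fin m → Bool, ‖∑ j, (if ε j then x j else -x j)‖ ^ 2) /
        (2 : ℝ) ^ m) ^ ((1 : ℝ) / 2)) 2, ← Real.rpow_mul (by positivity)]
    norm_num
  rw [h1]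
  have h2 : ∀ e : Fin m → Bool, (∑ j, sg 𝕜 (e j) • x j) = ∑ j, (if e j then x j else -x j) := by
    intro e
    exact Finset.sum_congr rfl fun j _ => sg_smul _ _
  rw [Finset.sum_congr rfl fun e _ => by rw [h2 e]]
  field_simp

lemma sum_sq_rad {𝕜 : Type*} [RCLike 𝕜] {l m : ℕ} (hl : 1 ≤ l) {F : Type*}
    [NormedAddCommGroup F] [NormedSpace 𝕜 F] (T : Fin m → F) :
    ∑ ε : Fin l → Fin m → Bool, ‖∑ j, (∏ i, sg 𝕜 (ε i j)) • T j‖ ^ 2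
      = ((2 : ℝ) ^ m) ^ l * radNorm T ^ 2 := by
  classical
  set ι0 : Fin l := ⟨0, hl⟩ with hι0
  set eqv := Equiv.funSplitAt ι0 (Fin m → Bool) with heqv
  have h0 : ∑ ε : Fin l → Fin m → Bool, ‖∑ j, (∏ i, sg 𝕜 (ε i j)) • T j‖ ^ 2
      = ∑ p : (Fin m → Bool) × ({i : Fin l // i ≠ ι0} → Fin m → Bool),
          ‖∑ j, (∏ i, sg 𝕜 (eqv.symm p i j)) • T j‖ ^ 2 :=
    (Equiv.sum_comp eqv.symm
      (fun ε : Fin l → Fin m → Bool => ‖∑ j, (∏ i, sg 𝕜 (ε i j)) • T j‖ ^ 2)).symm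
  rw [h0, Fintype.sum_prod_type_right]
  have hinner : ∀ rest : {i : Fin l // i ≠ ι0} → Fin m → Bool,
      ∑ e0 : Fin m → Bool, ‖∑ j, (∏ i, sg 𝕜 (eqv.symm (e0, rest) i j)) • T j‖ ^ 2
        = (2 : ℝ) ^ m * radNorm T ^ 2 := by
    intro rest
    set s : Fin m → 𝕜 := fun j => ∏ i : {i : Fin l // i ≠ ι0}, sg 𝕜 (rest i j) with hsdef
    have claimA : ∀ (e0 : Fin m → Bool) (j : Fin m),
        (∏ i, sg 𝕜 (eqv.symm (e0, rest) i j)) = sg 𝕜 (e0 j) * s j := by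
      intro e0 j
      have happ : ∀ i : Fin l,
          eqv.symm (e0, rest) i = if h : i = ι0 then e0 else rest ⟨i, h⟩ := fun i => by
        rw [heqv]; exact Equiv.funSplitAt_symm_apply ι0 (Fin m → Bool) (e0, rest) i
      calc ∏ i : Fin l, sg 𝕜 (eqv.symm (e0, rest) i j)
          = ∏ i : Fin l, sg 𝕜 ((if h : i = ι0 then e0 else rest ⟨i, h⟩) j) :=
            Finset.prod_congr rfl fun i _ => by rw [happ i]
        _ = sg 𝕜 (e0 j) * s j := by
            rw [← Finset.mul_prod_erase Finset.univ _ (Finset.mem_univ ι0)]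
            refine congr_arg₂ (· * ·) ?_ ?_
            · rw [dif_pos rfl]
            · rw [show s j = ∏ i : {i : Fin l // i ≠ ι0}, sg 𝕜 (rest i j) from rfl]
              rw [Finset.prod_subtype (p := fun i : Fin l => i ≠ ι0) (Finset.univ.erase ι0)
                (fun i => by simp [Finset.mem_erase])
                (fun i : Fin l => sg 𝕜 ((if h : i = ι0 then e0 else rest ⟨i, h⟩) j))]
              refine Finset.prod_congr rfl fun i _ => ?_
              rw [dif_neg i.2, Subtype.coe_eta]
    have claimB : ∀ j, s j = 1 ∨ s j = -1 := by
      intro j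
      refine Finset.prod_induction _ (fun z : 𝕜 => z = 1 ∨ z = -1) ?_ (Or.inl rfl) ?_
      · rintro a b (rfl | rfl) (rfl | rfl) <;> simp
      · intro i _
        cases rest i j <;> simp [sg]
    have hb : ∀ j, s j = sg 𝕜 (if s j = 1 then true else false) := by
      intro j
      rcases claimB j with h | h
      · rw [if_pos h, h]; simp [sg]
      · have hne : s j ≠ 1 := by rw [h]; intro hh; exact (by norm_num : (-1 : 𝕜) ≠ 1) hh
        rw [if_neg hne, h]; simp [sg]
    calc ∑ e0 : Fin m → Bool, ‖∑ j, (∏ i, sg 𝕜 (eqv.symm (e0, rest) i j)) • T j‖ ^ 2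
        = ∑ e0 : Fin m → Bool, ‖∑ j, (sg 𝕜 (e0 j) * s j) • T j‖ ^ 2 := by
          refine Finset.sum_congr rfl fun e0 _ => ?_
          refine congrArg (fun t : F => ‖t‖ ^ 2) (Finset.sum_congr rfl fun j _ => ?_)
          rw [claimA e0 j]
      _ = ∑ e0 : Fin m → Bool, ‖∑ j, sg 𝕜 (e0 j) • T j‖ ^ 2 :=
          sum_sq_absorb s (fun j => if s j = 1 then true else false) hb T
      _ = (2 : ℝ) ^ m * radNorm T ^ 2 := radNorm_sq (𝕜 := 𝕜) T
  rw [Finset.sum_congr rfl fun rest _ => hinner rest]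
  rw [Finset.sum_const, Finset.card_univ, nsmul_eq_mul]
  have hcard : Fintype.card ({i : Fin l // i ≠ ι0} → Fin m → Bool) = (2 ^ m) ^ (l - 1) := by
    rw [Fintype.card_fun, Fintype.card_fun]
    congr 1
    · simp
    · simp [Fintype.card_subtype_compl, Fintype.card_subtype_eq]
  rw [hcard]
  push_cast
  rw [← mul_assoc, ← pow_succ, Nat.sub_add_cancel hl]

lemma weakNorm_unit_smul {𝕜 : Type*} [RCLike 𝕜] {E : Type*} [NormedAddCommGroup E]
    [NormedSpace 𝕜 E] (r : ℝ) {m : ℕ} (c : Fin m → 𝕜) (hc : ∀ j, ‖c j‖ = 1)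
    (x : Fin m → E) :
    weakNorm 𝕜 r (fun j => c j • x j) = weakNorm 𝕜 r x := by
  unfold weakNorm
  refine congrArg _ (funext fun φ => ?_)
  congr 1
  refine Finset.sum_congr rfl fun j _ => ?_
  rw [map_smul, smul_eq_mul, norm_mul, hc j, one_mul]

/-- If the associated `k`-linear map `A_k` of an `n`-linear form `A` (here `n = k + l`,
`l ≥ 1`) into the space of continuous `(n−k)`-linear forms is almost summing with constant
`C`, then `∑_j |A(x_j^1, …, x_j^n)| ≤ C ∏_{i≤k} ‖(x_j^i)‖_{ℓ₂ʷ} ∏_{i>k} ‖(x_j^i)‖_{Rad}`. -/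
theorem almost_summing_mixed_estimate {𝕜 : Type*} [RCLike 𝕜] {k l : ℕ} (hk : 1 ≤ k)
    (hl : 1 ≤ l)
    (E : Fin (k + l) → Type*) [∀ i, NormedAddCommGroup (E i)] [∀ i, NormedSpace 𝕜 (E i)]
    [∀ i, CompleteSpace (E i)]
    (A : ContinuousMultilinearMap 𝕜 E 𝕜)
    (Ak : ContinuousMultilinearMap 𝕜 (fun i : Fin k => E (Fin.castAdd l i))
      (ContinuousMultilinearMap 𝕜 (fun i : Fin l => E (Fin.natAdd k i)) 𝕜))
    (hAAk : ∀ (v : ∀ i : Fin k, E (Fin.castAdd l i)) (w : ∀ i : Fin l, E (Fin.natAdd k i)),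
      Ak v w = A (fun i => Fin.addCases (motive := fun i => E i) v w i))
    (C : ℝ) (hC : 0 < C)
    (hAk : ∀ (m : ℕ) (x : ∀ i : Fin k, Fin m → E (Fin.castAdd l i)),
      radNorm (fun j => Ak (fun i => x i j)) ≤ C * ∏ i, weakNorm 𝕜 2 (x i)) :
    ∀ (m : ℕ) (x : ∀ i, Fin m → E i),
      ∑ j, ‖A (fun i => x i j)‖
        ≤ C * (∏ i : Fin k, weakNorm 𝕜 2 (x (Fin.castAdd l i)))
          * ∏ i : Fin l, radNorm (x (Fin.natAdd k i)) := by
  intro m x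
  classical
  set T : Fin m → ContinuousMultilinearMap 𝕜 (fun i : Fin l => E (Fin.natAdd k i)) 𝕜 :=
    fun j => Ak (fun i => x (Fin.castAdd l i) j) with hT
  set z : Fin m → 𝕜 := fun j => A (fun i => x i j) with hzdef
  have hTz : ∀ j, T j (fun i => x (Fin.natAdd k i) j) = z j := by
    intro j
    rw [hT, hAAk, hzdef]
    congr 1
    funext i
    refine Fin.addCases (motive := fun i =>
      Fin.addCases (motive := fun i => E i) (fun i' => x (Fin.castAdd l i') j)
        (fun i' => x (Fin.natAdd k i') j) i = x i j) ?_ ?_ i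
    · intro i'; rw [Fin.addCases_left]
    · intro i'; rw [Fin.addCases_right]
  set c : Fin m → 𝕜 := fun j => if _ : z j = 0 then 1
    else (starRingEnd 𝕜) (z j) / ((‖z j‖ : ℝ) : 𝕜) with hcdef
  have hcnorm : ∀ j, ‖c j‖ = 1 := by
    intro j
    rw [hcdef]
    by_cases h : z j = 0
    · simp [h]
    · simp only [dif_neg h]
      rw [norm_div, RCLike.norm_conj, RCLike.norm_ofReal, abs_of_nonneg (norm_nonneg _)]
      exact div_self (norm_ne_zero_iff.mpr h)
  have hcz : ∀ j, c j * z j = ((‖z j‖ : ℝ) : 𝕜) := by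
    intro j
    rw [hcdef]
    by_cases h : z j = 0
    · simp [h]
    · simp only [dif_neg h]
      have hz0 : ((‖z j‖ : ℝ) : 𝕜) ≠ 0 :=
        RCLike.ofReal_ne_zero.mpr (norm_ne_zero_iff.mpr h)
      field_simp
      rw [RCLike.conj_mul]
  set i0 : Fin k := ⟨0, hk⟩ with hi0
  set x' : ∀ i : Fin k, Fin m → E (Fin.castAdd l i) :=
    fun i j => (if i = i0 then c j else 1) • x (Fin.castAdd l i) j with hx'
  have hAkx' : ∀ j, Ak (fun i => x' i j) = c j • T j := by
    intro j
    have h1 := Ak.map_smul_univ (fun i => if i = i0 then c j else 1)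
      (fun i => x (Fin.castAdd l i) j)
    have h2 : (∏ i : Fin k, if i = i0 then c j else 1) = c j := by
      simp [Finset.prod_ite_eq']
    rw [hx', h1, h2, hT]
  have hw : ∀ i, weakNorm 𝕜 2 (x' i) = weakNorm 𝕜 2 (x (Fin.castAdd l i)) := by
    intro i
    rw [hx']
    exact weakNorm_unit_smul 2 (fun j => if i = i0 then c j else 1)
      (fun j => by by_cases h : i = i0 <;> simp [h, hcnorm j]) _
  have hrad' : radNorm (fun j => c j • T j) ≤ C * ∏ i, weakNorm 𝕜 2 (x (Fin.castAdd l i)) := by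
    have h := hAk m x'
    rw [Finset.prod_congr rfl (fun i _ => hw i)] at h
    rw [show (fun j => Ak fun i => x' i j) = fun j => c j • T j from funext hAkx'] at h
    exact h
  set P : ℝ := ∑ j, ‖z j‖ with hP
  have hPnonneg : 0 ≤ P := Finset.sum_nonneg fun j _ => norm_nonneg _
  have hkey := key_identity (𝕜 := 𝕜) (fun j => c j • T j)
    (fun i j => x (Fin.natAdd k i) j)
  have hsum : (∑ j, (c j • T j) (fun i => x (Fin.natAdd k i) j)) = ((P : ℝ) : 𝕜) := by
    rw [hP]
    push_cast
    refine Finset.sum_congr rfl fun j _ => ?_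
    rw [Pi.smul_apply, smul_eq_mul, hTz j, hcz j]
  have hRT : 0 ≤ radNorm (fun j => c j • T j) := radNorm_nonneg _
  have hRi : ∀ i : Fin l, 0 ≤ radNorm (x (Fin.natAdd k i)) := fun i => radNorm_nonneg _
  have hprodRi : 0 ≤ ∏ i : Fin l, radNorm (x (Fin.natAdd k i)) :=
    Finset.prod_nonneg fun i _ => hRi i
  have hDl : (0 : ℝ) < ((2 : ℝ) ^ m) ^ l := by positivity
  -- step 1
  have h1 : ((2 : ℝ) ^ m) ^ l * P
      ≤ ∑ ε : Fin l → Fin m → Bool,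
          ‖∑ j, (∏ i, sg 𝕜 (ε i j)) • (c j • T j)‖
            * ∏ i, ‖∑ j, sg 𝕜 (ε i j) • x (Fin.natAdd k i) j‖ := by
    have hnorm : ((2 : ℝ) ^ m) ^ l * P = ‖((2 : 𝕜) ^ m) ^ l * ((P : ℝ) : 𝕜)‖ := by
      rw [norm_mul, norm_pow, norm_pow, RCLike.norm_ofReal, abs_of_nonneg hPnonneg]
      norm_num
    calc ((2 : ℝ) ^ m) ^ l * P
        = ‖∑ ε : Fin l → Fin m → Bool,
            (∑ j, (∏ i, sg 𝕜 (ε i j)) • (c j • T j))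
              (fun i => ∑ j, sg 𝕜 (ε i j) • x (Fin.natAdd k i) j)‖ := by
          rw [hkey, hsum, hnorm]
      _ ≤ ∑ ε : Fin l → Fin m → Bool,
            ‖(∑ j, (∏ i, sg 𝕜 (ε i j)) • (c j • T j))
              (fun i => ∑ j, sg 𝕜 (ε i j) • x (Fin.natAdd k i) j)‖ :=
          norm_sum_le _ _
      _ ≤ ∑ ε : Fin l → Fin m → Bool,
            ‖∑ j, (∏ i, sg 𝕜 (ε i j)) • (c j • T j)‖
              * ∏ i, ‖∑ j, sg 𝕜 (ε i j) • x (Fin.natAdd k i) j‖ :=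
          Finset.sum_le_sum fun ε _ => ContinuousMultilinearMap.le_opNorm _ _
  -- Cauchy-Schwarz
  have h3 : (∑ ε : Fin l → Fin m → Bool,
        ‖∑ j, (∏ i, sg 𝕜 (ε i j)) • (c j • T j)‖
          * ∏ i, ‖∑ j, sg 𝕜 (ε i j) • x (Fin.natAdd k i) j‖) ^ 2
      ≤ (∑ ε : Fin l → Fin m → Bool, ‖∑ j, (∏ i, sg 𝕜 (ε i j)) • (c j • T j)‖ ^ 2)
        * ∑ ε : Fin l → Fin m → Bool,
            (∏ i, ‖∑ j, sg 𝕜 (ε i j) • x (Fin.natAdd k i) j‖) ^ 2 :=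
    Finset.sum_mul_sq_le_sq_mul_sq _ _ _
  have hQ1 : ∑ ε : Fin l → Fin m → Bool, ‖∑ j, (∏ i, sg 𝕜 (ε i j)) • (c j • T j)‖ ^ 2
      = ((2 : ℝ) ^ m) ^ l * radNorm (fun j => c j • T j) ^ 2 :=
    sum_sq_rad hl _
  have hQ2 : ∑ ε : Fin l → Fin m → Bool,
        (∏ i, ‖∑ j, sg 𝕜 (ε i j) • x (Fin.natAdd k i) j‖) ^ 2
      = ((2 : ℝ) ^ m) ^ l * (∏ i : Fin l, radNorm (x (Fin.natAdd k i))) ^ 2 := by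
    have e1 : ∀ ε : Fin l → Fin m → Bool,
        (∏ i, ‖∑ j, sg 𝕜 (ε i j) • x (Fin.natAdd k i) j‖) ^ 2
          = ∏ i, ‖∑ j, sg 𝕜 (ε i j) • x (Fin.natAdd k i) j‖ ^ 2 := fun ε =>
      (Finset.prod_pow _ _ _).symm
    rw [Finset.sum_congr rfl fun ε _ => e1 ε]
    rw [show (Finset.univ : Finset (Fin l → Fin m → Bool))
        = Fintype.piFinset (fun _ => Finset.univ) from (Fintype.piFinset_univ).symm]
    rw [Finset.sum_prod_piFinset (Finset.univ : Finset (Fin m → Bool))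
      (fun (i : Fin l) (e : Fin m → Bool) => ‖∑ j, sg 𝕜 (e j) • x (Fin.natAdd k i) j‖ ^ 2)]
    rw [Finset.prod_congr rfl fun i _ => radNorm_sq (𝕜 := 𝕜) (x (Fin.natAdd k i))]
    rw [Finset.prod_mul_distrib, Finset.prod_const, Finset.card_univ, Fintype.card_fin,
      Finset.prod_pow]
  have h4 : ∑ ε : Fin l → Fin m → Bool,
        ‖∑ j, (∏ i, sg 𝕜 (ε i j)) • (c j • T j)‖
          * ∏ i, ‖∑ j, sg 𝕜 (ε i j) • x (Fin.natAdd k i) j‖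
      ≤ ((2 : ℝ) ^ m) ^ l
          * (radNorm (fun j => c j • T j) * ∏ i : Fin l, radNorm (x (Fin.natAdd k i))) := by
    have hnn : 0 ≤ ∑ ε : Fin l → Fin m → Bool,
        ‖∑ j, (∏ i, sg 𝕜 (ε i j)) • (c j • T j)‖
          * ∏ i, ‖∑ j, sg 𝕜 (ε i j) • x (Fin.natAdd k i) j‖ :=
      Finset.sum_nonneg fun ε _ => mul_nonneg (norm_nonneg _)
        (Finset.prod_nonneg fun i _ => norm_nonneg _)
    have hb : 0 ≤ ((2 : ℝ) ^ m) ^ l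
        * (radNorm (fun j => c j • T j) * ∏ i : Fin l, radNorm (x (Fin.natAdd k i))) :=
      mul_nonneg hDl.le (mul_nonneg hRT hprodRi)
    have hsq : (∑ ε : Fin l → Fin m → Bool,
          ‖∑ j, (∏ i, sg 𝕜 (ε i j)) • (c j • T j)‖
            * ∏ i, ‖∑ j, sg 𝕜 (ε i j) • x (Fin.natAdd k i) j‖) ^ 2
        ≤ (((2 : ℝ) ^ m) ^ l
            * (radNorm (fun j => c j • T j)
              * ∏ i : Fin l, radNorm (x (Fin.natAdd k i)))) ^ 2 := by
      refine h3.trans ?_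
      rw [hQ1, hQ2]
      ring_nf
      exact le_of_eq (by ring)
    exact (pow_le_pow_iff_left₀ hnn hb two_ne_zero).mp hsq
  have h5 : ((2 : ℝ) ^ m) ^ l * P
      ≤ ((2 : ℝ) ^ m) ^ l
          * (radNorm (fun j => c j • T j) * ∏ i : Fin l, radNorm (x (Fin.natAdd k i))) :=
    h1.trans h4
  have h6 : P ≤ radNorm (fun j => c j • T j) * ∏ i : Fin l, radNorm (x (Fin.natAdd k i)) :=
    le_of_mul_le_mul_left h5 hDl
  calc ∑ j, ‖z j‖
      ≤ radNorm (fun j => c j • T j) * ∏ i : Fin l, radNorm (x (Fin.natAdd k i)) := h6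
    _ ≤ (C * ∏ i : Fin k, weakNorm 𝕜 2 (x (Fin.castAdd l i)))
          * ∏ i : Fin l, radNorm (x (Fin.natAdd k i)) :=
        mul_le_mul_of_nonneg_right hrad' hprodRi
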